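/- Let A, B ∈ ℝ with A ≠ 0, and set λ₊ = (B + √(B² + 4A²))/2. Then λ₊ > 0, and for the linear dynamical system u̇ = B·u + A·m, ṁ = A·u the following exit-time asymptotics holds: fix any R > 0 and any unit vector v ∈ ℝ² that is not orthogonal to the vector (λ₊, A); for ε > 0 let (u_ε, m_ε) : [0,∞) → ℝ² be the solution with initial condition (u_ε(0), m_ε(0)) = ε·v, and define T(ε) := inf{ t ≥ 0 : u_ε(t)² + m_ε(t)² ≥ R² }. Then lim_{ε→0⁺} T(ε)/log(1/ε) = 1/λ₊ = (−B + √(B² + 4A²))/(2A²). -/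

import Mathlib

open Real Filter Set

/-- Solutions of the scalar linear ODE `f' = l·f` on `[0, ∞)` are exponentials. -/
lemma ode_exp (f : ℝ → ℝ) (l : ℝ) (hf : ∀ t ≥ (0:ℝ), HasDerivAt f (l * f t) t) :
    ∀ t ≥ (0:ℝ), f t = f 0 * Real.exp (l * t) := by
  intro t ht
  have hg : ∀ x ∈ Set.Icc (0:ℝ) t, f x * Real.exp (-l * x) = f 0 * Real.exp (-l * 0) := by
    apply constant_of_has_deriv_right_zero
      (f := fun x => f x * Real.exp (-l * x))
    · intro x hx
      exact (((hf x hx.1).mul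
        (((hasDerivAt_id x).const_mul (-l)).exp)).continuousAt).continuousWithinAt
    · intro x hx
      have h1 : HasDerivAt (fun x => f x * Real.exp (-l * x))
          (l * f x * Real.exp (-l * x) + f x * (Real.exp (-l * x) * (-l * 1))) x :=
        (hf x hx.1).mul (((hasDerivAt_id x).const_mul (-l)).exp)
      have h2 : l * f x * Real.exp (-l * x) + f x * (Real.exp (-l * x) * (-l * 1)) = 0 := by
        ring
      rw [h2] at h1
      exact h1.hasDerivWithinAt
  have h := hg t ⟨ht, le_rfl⟩
  have he : Real.exp (-l * t) * Real.exp (l * t) = 1 := by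
    rw [← Real.exp_add]; ring_nf; exact Real.exp_zero
  calc f t = f t * (Real.exp (-l * t) * Real.exp (l * t)) := by rw [he, mul_one]
    _ = (f t * Real.exp (-l * t)) * Real.exp (l * t) := by ring
    _ = (f 0 * Real.exp (-l * 0)) * Real.exp (l * t) := by rw [h]
    _ = f 0 * Real.exp (l * t) := by norm_num

set_option maxHeartbeats 1600000 in
/-- Exit-time asymptotics for the linearized LoRA search-phase dynamics
`u̇ = B·u + A·m`, `ṁ = A·u`: starting from `ε·v` with `v` a unit vector not
orthogonal to the unstable eigenvector `(λ₊, A)`, the exit time from the ball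
of radius `R` satisfies `T(ε)/log(1/ε) → 1/λ₊ = (−B + √(B² + 4A²))/(2A²)`
as `ε → 0⁺`, and `λ₊ > 0`. -/
theorem stmt0 (A B : ℝ) (hA : A ≠ 0)
    (lam : ℝ) (hlam : lam = (B + Real.sqrt (B ^ 2 + 4 * A ^ 2)) / 2)
    (R : ℝ) (hR : 0 < R)
    (v : ℝ × ℝ) (hv : v.1 ^ 2 + v.2 ^ 2 = 1)
    (hvo : v.1 * lam + v.2 * A ≠ 0)
    (u m : ℝ → ℝ → ℝ)
    (hu : ∀ ε > (0 : ℝ), ∀ t ≥ (0 : ℝ), HasDerivAt (u ε) (B * u ε t + A * m ε t) t)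
    (hm : ∀ ε > (0 : ℝ), ∀ t ≥ (0 : ℝ), HasDerivAt (m ε) (A * u ε t) t)
    (h0 : ∀ ε > (0 : ℝ), u ε 0 = ε * v.1 ∧ m ε 0 = ε * v.2)
    (T : ℝ → ℝ)
    (hT : ∀ ε > (0 : ℝ),
      T ε = sInf {t : ℝ | 0 ≤ t ∧ R ^ 2 ≤ (u ε t) ^ 2 + (m ε t) ^ 2}) :
    0 < lam ∧
    (1 / lam = (-B + Real.sqrt (B ^ 2 + 4 * A ^ 2)) / (2 * A ^ 2)) ∧
    Filter.Tendsto (fun ε => T ε / Real.log (1 / ε))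
      (nhdsWithin 0 (Set.Ioi 0)) (nhds (1 / lam)) := by
  set s := Real.sqrt (B ^ 2 + 4 * A ^ 2) with hs
  have hA2 : 0 < A ^ 2 := by positivity
  have hs2 : s ^ 2 = B ^ 2 + 4 * A ^ 2 := Real.sq_sqrt (by positivity)
  have hs0 : 0 ≤ s := Real.sqrt_nonneg _
  have hsB : |B| < s := by nlinarith [sq_abs B, abs_nonneg B]
  have hlam_pos : 0 < lam := by
    have := neg_abs_le B; rw [hlam]; nlinarith
  set lm : ℝ := (B - s) / 2 with hlm
  have hlm_neg : lm < 0 := by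
    have := le_abs_self B; rw [hlm]; nlinarith
  have heig : lam ^ 2 = B * lam + A ^ 2 := by rw [hlam]; nlinarith
  have heig' : lm ^ 2 = B * lm + A ^ 2 := by rw [hlm]; nlinarith
  have hll : lam * lm + A ^ 2 = 0 := by rw [hlam, hlm]; nlinarith
  have hinv : 1 / lam = (-B + s) / (2 * A ^ 2) := by
    rw [div_eq_div_iff (ne_of_gt hlam_pos) (by positivity), hlam]
    nlinarith
  refine ⟨hlam_pos, hinv, ?_⟩
  -- abbreviations
  have hNp : 0 < lam ^ 2 + A ^ 2 := by positivity
  have hNm : 0 < lm ^ 2 + A ^ 2 := by positivity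
  set c := v.1 * lam + v.2 * A with hc
  set d := v.1 * lm + v.2 * A with hd
  set a := c ^ 2 / (lam ^ 2 + A ^ 2) with ha
  set b := d ^ 2 / (lm ^ 2 + A ^ 2) with hb
  have ha_pos : 0 < a := div_pos (sq_pos_of_ne_zero hvo) hNp
  have hb_nonneg : 0 ≤ b := by positivity
  have hab : 0 < a + b := by linarith
  -- explicit solution formula
  have hF : ∀ ε > (0:ℝ), ∀ t ≥ (0:ℝ), u ε t ^ 2 + m ε t ^ 2 =
      ε ^ 2 * (a * Real.exp (lam * t) ^ 2 + b * Real.exp (lm * t) ^ 2) := by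
    intro ε hε
    have hP : ∀ t ≥ (0:ℝ), lam * u ε t + A * m ε t = ε * c * Real.exp (lam * t) := by
      have hderiv : ∀ t ≥ (0:ℝ), HasDerivAt (fun t => lam * u ε t + A * m ε t)
          (lam * (lam * u ε t + A * m ε t)) t := by
        intro t ht
        have h1 := ((hu ε hε t ht).const_mul lam).add ((hm ε hε t ht).const_mul A)
        exact h1.congr_deriv (by linear_combination -(u ε t) * heig)
      intro t ht
      have := ode_exp _ lam hderiv t ht
      rw [this, (h0 ε hε).1, (h0 ε hε).2, hc]; ring
    have hQ : ∀ t ≥ (0:ℝ), lm * u ε t + A * m ε t = ε * d * Real.exp (lm * t) := by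
      have hderiv : ∀ t ≥ (0:ℝ), HasDerivAt (fun t => lm * u ε t + A * m ε t)
          (lm * (lm * u ε t + A * m ε t)) t := by
        intro t ht
        have h1 := ((hu ε hε t ht).const_mul lm).add ((hm ε hε t ht).const_mul A)
        exact h1.congr_deriv (by linear_combination -(u ε t) * heig')
      intro t ht
      have := ode_exp _ lm hderiv t ht
      rw [this, (h0 ε hε).1, (h0 ε hε).2, hd]; ring
    intro t ht
    have hid : (lm ^ 2 + A ^ 2) * (lam * u ε t + A * m ε t) ^ 2
        + (lam ^ 2 + A ^ 2) * (lm * u ε t + A * m ε t) ^ 2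
        = ((lam ^ 2 + A ^ 2) * (lm ^ 2 + A ^ 2)) * (u ε t ^ 2 + m ε t ^ 2) := by
      linear_combination ((lam * lm - A ^ 2) * (u ε t) ^ 2 + (A ^ 2 - lam * lm) * (m ε t) ^ 2
        + 2 * A * (lam + lm) * (u ε t) * (m ε t)) * hll
    rw [hP t ht, hQ t ht] at hid
    rw [ha, hb]
    field_simp
    rw [mul_comm t lm]
    linarith [hid]
  clear_value s lm c d a b
  -- sandwich bounds on the exit time
  have key : ∀ ε, 0 < ε → ε ^ 2 * (a + b) < R ^ 2 →
      ε ^ 2 * a * Real.exp (lam * T ε) ^ 2 ≤ R ^ 2 ∧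
      R ^ 2 ≤ ε ^ 2 * (a + b) * Real.exp (lam * T ε) ^ 2 := by
    intro ε hε hsmall
    set F : ℝ → ℝ := fun t => ε ^ 2 * (a * Real.exp (lam * t) ^ 2 + b * Real.exp (lm * t) ^ 2)
      with hFdef
    have hFc : Continuous F := by fun_prop
    have hsq : ∀ x : ℝ, Real.exp x ^ 2 = Real.exp (2 * x) := by
      intro x; rw [sq, ← Real.exp_add]; ring_nf
    have hSeq : {t : ℝ | 0 ≤ t ∧ R ^ 2 ≤ (u ε t) ^ 2 + (m ε t) ^ 2}
        = {t : ℝ | 0 ≤ t ∧ R ^ 2 ≤ F t} := by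
      ext t
      simp only [mem_setOf_eq, and_congr_right_iff]
      intro ht
      rw [hF ε hε t ht]
    set S := {t : ℝ | 0 ≤ t ∧ R ^ 2 ≤ F t} with hSdef
    have hclosed : IsClosed S := by
      have : S = Ici 0 ∩ F ⁻¹' (Ici (R ^ 2)) := by
        ext t; simp [hSdef, mem_setOf_eq, and_comm]
      rw [this]
      exact isClosed_Ici.inter (IsClosed.preimage hFc isClosed_Ici)
    have hbdd : BddBelow S := ⟨0, fun x hx => hx.1⟩
    have hne : S.Nonempty := by
      set t₀ := max 0 (Real.log (R ^ 2 / (ε ^ 2 * a)) / (2 * lam)) with ht₀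
      have ht00 : 0 ≤ t₀ := le_max_left _ _
      have hx : (0:ℝ) < R ^ 2 / (ε ^ 2 * a) := by positivity
      have h2t : Real.log (R ^ 2 / (ε ^ 2 * a)) ≤ 2 * lam * t₀ := by
        have h1 : Real.log (R ^ 2 / (ε ^ 2 * a)) / (2 * lam) ≤ t₀ := le_max_right _ _
        rw [div_le_iff₀ (by positivity)] at h1
        nlinarith
      have h3 : R ^ 2 / (ε ^ 2 * a) ≤ Real.exp (2 * (lam * t₀)) := by
        rw [← Real.exp_log hx]
        exact Real.exp_le_exp.mpr (by linarith)
      refine ⟨t₀, ht00, ?_⟩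
      have h4 : R ^ 2 ≤ ε ^ 2 * a * Real.exp (lam * t₀) ^ 2 := by
        rw [hsq]
        rw [div_le_iff₀ (by positivity)] at h3
        nlinarith
      have h5 : 0 ≤ ε ^ 2 * b * Real.exp (lm * t₀) ^ 2 := by positivity
      show R ^ 2 ≤ ε ^ 2 * (a * Real.exp (lam * t₀) ^ 2 + b * Real.exp (lm * t₀) ^ 2)
      nlinarith
    have hTmem : T ε ∈ S := by
      rw [hT ε hε, hSeq]
      exact hclosed.csInf_mem hne hbdd
    have hT0 : 0 ≤ T ε := hTmem.1
    have hE1 : Real.exp (lm * T ε) ^ 2 ≤ 1 := by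
      have : Real.exp (lm * T ε) ≤ 1 := Real.exp_le_one_iff.mpr (by nlinarith)
      nlinarith [Real.exp_pos (lm * T ε)]
    have hE2 : 1 ≤ Real.exp (lam * T ε) ^ 2 := by
      have : 1 ≤ Real.exp (lam * T ε) := Real.one_le_exp (by positivity)
      nlinarith
    constructor
    · have hTpos : 0 < T ε := by
        rcases lt_or_eq_of_le hT0 with h | h
        · exact h
        · exfalso
          have h00 : F 0 = ε ^ 2 * (a + b) := by simp [hFdef]
          have hm2 := hTmem.2
          rw [← h] at hm2
          rw [h00] at hm2
          linarith
      have hlt : ∀ t, 0 ≤ t → t < T ε → F t < R ^ 2 := by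
        intro t h1 h2
        by_contra hcon
        push_neg at hcon
        have htS : t ∈ S := ⟨h1, hcon⟩
        have : T ε ≤ t := by rw [hT ε hε, hSeq]; exact csInf_le hbdd htS
        linarith
      have hle : F (T ε) ≤ R ^ 2 := by
        have htend : Tendsto F (nhdsWithin (T ε) (Iio (T ε))) (nhds (F (T ε))) :=
          (hFc.continuousAt).continuousWithinAt.tendsto
        refine le_of_tendsto htend ?_
        filter_upwards [Ioo_mem_nhdsLT_of_mem (show T ε ∈ Ioc 0 (T ε) from ⟨hTpos, le_rfl⟩)]
          with t ht
        exact (hlt t ht.1.le ht.2).le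
      have h9 : 0 ≤ ε ^ 2 * (b * Real.exp (lm * T ε) ^ 2) := by positivity
      have : ε ^ 2 * a * Real.exp (lam * T ε) ^ 2 ≤ F (T ε) := by
        simp only [hFdef]
        linarith [h9]
      linarith
    · have h1 := hTmem.2
      simp only [hFdef] at h1
      have hE3 : Real.exp (lm * T ε) ^ 2 ≤ Real.exp (lam * T ε) ^ 2 := le_trans hE1 hE2
      have h9 : ε ^ 2 * b * Real.exp (lm * T ε) ^ 2 ≤ ε ^ 2 * b * Real.exp (lam * T ε) ^ 2 :=
        mul_le_mul_of_nonneg_left hE3 (by positivity)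
      nlinarith [h1, h9]
  -- pass to logarithms and conclude by squeezing
  set K₁ := Real.log (R ^ 2 / (a + b)) with hK₁
  set K₂ := Real.log (R ^ 2 / a) with hK₂
  have key2 : ∀ ε, 0 < ε → ε ^ 2 * (a + b) < R ^ 2 →
      K₁ + 2 * Real.log (1 / ε) ≤ 2 * lam * T ε ∧
      2 * lam * T ε ≤ K₂ + 2 * Real.log (1 / ε) := by
    intro ε hε hsm
    obtain ⟨hup, hlo⟩ := key ε hε hsm
    have hsq : Real.exp (lam * T ε) ^ 2 = Real.exp (2 * (lam * T ε)) := by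
      rw [sq, ← Real.exp_add]; ring_nf
    have hlogε : Real.log (1 / ε) = - Real.log ε := by
      rw [one_div, Real.log_inv]
    have hlogε2 : Real.log (ε ^ 2) = 2 * Real.log ε := by
      rw [Real.log_pow]; push_cast; ring
    constructor
    · have h1 : Real.log (R ^ 2) ≤ Real.log (ε ^ 2 * (a + b) * Real.exp (2 * (lam * T ε))) :=
        Real.log_le_log (by positivity) (by rw [← hsq]; exact hlo)
      rw [Real.log_mul (by positivity) (Real.exp_ne_zero _), Real.log_exp,
        Real.log_mul (by positivity) (ne_of_gt hab), hlogε2] at h1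
      have h2 : K₁ = Real.log (R ^ 2) - Real.log (a + b) := by
        rw [hK₁, Real.log_div (by positivity) (ne_of_gt hab)]
      rw [hlogε]
      linarith
    · have h1 : Real.log (ε ^ 2 * a * Real.exp (2 * (lam * T ε))) ≤ Real.log (R ^ 2) :=
        Real.log_le_log (by positivity) (by rw [← hsq]; exact hup)
      rw [Real.log_mul (by positivity) (Real.exp_ne_zero _), Real.log_exp,
        Real.log_mul (by positivity) (ne_of_gt ha_pos), hlogε2] at h1
      have h2 : K₂ = Real.log (R ^ 2) - Real.log a := by
        rw [hK₂, Real.log_div (by positivity) (ne_of_gt ha_pos)]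
      rw [hlogε]
      linarith
  have hLtop : Tendsto (fun ε : ℝ => Real.log (1 / ε)) (nhdsWithin 0 (Set.Ioi 0)) atTop := by
    have h1 : Tendsto (fun ε : ℝ => Real.log ε) (nhdsWithin 0 (Set.Ioi 0)) atBot :=
      Real.tendsto_log_nhdsGT_zero
    have h2 := tendsto_neg_atBot_atTop.comp h1
    refine h2.congr fun ε => ?_
    simp [Function.comp, one_div, Real.log_inv]
  have hLpos : ∀ᶠ ε in nhdsWithin 0 (Set.Ioi 0), 0 < Real.log (1 / ε) :=
    hLtop.eventually_gt_atTop 0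
  have hεpos : ∀ᶠ ε in nhdsWithin 0 (Set.Ioi 0), (0:ℝ) < ε :=
    eventually_mem_nhdsWithin
  have hsmall : ∀ᶠ ε in nhdsWithin 0 (Set.Ioi 0), ε ^ 2 * (a + b) < R ^ 2 := by
    have hcont : Tendsto (fun ε : ℝ => ε ^ 2 * (a + b)) (nhdsWithin 0 (Set.Ioi 0)) (nhds 0) := by
      have hc2 : Continuous (fun ε : ℝ => ε ^ 2 * (a + b)) := by fun_prop
      have h3 := (hc2.tendsto (0:ℝ)).mono_left
        (nhdsWithin_le_nhds (s := Set.Ioi (0:ℝ)))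
      simpa using h3
    exact hcont.eventually_lt_const (by positivity)
  have hinv0 : Tendsto (fun ε : ℝ => (Real.log (1 / ε))⁻¹)
      (nhdsWithin 0 (Set.Ioi 0)) (nhds 0) := hLtop.inv_tendsto_atTop
  have hg : ∀ K : ℝ, Tendsto (fun ε : ℝ => (K * (Real.log (1 / ε))⁻¹ + 2) / (2 * lam))
      (nhdsWithin 0 (Set.Ioi 0)) (nhds (1 / lam)) := by
    intro K
    have h1 := ((hinv0.const_mul K).add_const 2).div_const (2 * lam)
    have h2 : (K * 0 + 2) / (2 * lam) = 1 / lam := by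
      rw [mul_zero, zero_add]
      field_simp
    rw [h2] at h1
    exact h1
  refine tendsto_of_tendsto_of_tendsto_of_le_of_le' (hg K₁) (hg K₂) ?_ ?_
  · filter_upwards [hεpos, hsmall, hLpos] with ε h1 h2 h3
    obtain ⟨hlo, _⟩ := key2 ε h1 h2
    set L := Real.log (1 / ε) with hL
    rw [div_le_div_iff₀ (by positivity) h3]
    have hcanc : (K₁ * L⁻¹ + 2) * L = K₁ + 2 * L := by
      field_simp
    rw [hcanc]
    nlinarith [hlo]
  · filter_upwards [hεpos, hsmall, hLpos] with ε h1 h2 h3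
    obtain ⟨_, hhi⟩ := key2 ε h1 h2
    set L := Real.log (1 / ε) with hL
    rw [div_le_div_iff₀ h3 (by positivity)]
    have hcanc : (K₂ * L⁻¹ + 2) * L = K₂ + 2 * L := by
      field_simp
    rw [hcanc]
    nlinarith [hhi]
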